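/- Let m ≥ 3, let P be a symmetric 2-index array on ℝ^m and let v ∈ ℝ^m with v ≠ 0. Then D(P,v) = 0 (all components vanish) if and only if both of the following hold: (i) v is an eigenvector of P, i.e. there exists μ ∈ ℝ with Σ_l P_{il}v_l = μ·v_i for all i; and (ii) for all x, y ∈ ℝ^m orthogonal to v one has Σ_{i,j} P_{ij}x_i y_j = τ·⟨x,y⟩, where τ = ((Σ_l P_{ll}) − (Σ_{l,k} P_{lk}v_l v_k)/|v|²)/(m−1). -/

import Mathlib

/-- The Kronecker delta on `Fin m`, regarded as a real 2-index array. -/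
def kdelta (m : ℕ) (i j : Fin m) : ℝ := if i = j then 1 else 0

/-- The 3-index array `D(P,v)` associated with a 2-index array `P` and a vector `v`:
`D(P,v)_{ijk} = (1/(m−2))·[ v_k P_{ij} − v_j P_{ik}
  + (1/(m−1))·Σ_l v_l (P_{lk}δ_{ij} − P_{lj}δ_{ik})
  − ((Σ_l P_{ll})/(m−1))·(v_kδ_{ij} − v_jδ_{ik}) ]`. -/
noncomputable def Dt (m : ℕ) (P : Fin m → Fin m → ℝ) (v : Fin m → ℝ)
    (i j k : Fin m) : ℝ :=
  (1 / ((m : ℝ) - 2)) *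
    (v k * P i j - v j * P i k
      + (1 / ((m : ℝ) - 1)) * ∑ l, v l * (P l k * kdelta m i j - P l j * kdelta m i k)
      - ((∑ l, P l l) / ((m : ℝ) - 1)) * (v k * kdelta m i j - v j * kdelta m i k))

lemma sum_mul_kdelta {m : ℕ} (f : Fin m → ℝ) (i : Fin m) :
    ∑ j, f j * kdelta m i j = f i := by simp [kdelta]

lemma sum_kdelta_mul {m : ℕ} (f : Fin m → ℝ) (i : Fin m) :
    ∑ j, kdelta m i j * f j = f i := by simp [kdelta]

lemma kdelta_symm {m : ℕ} (i j : Fin m) : kdelta m i j = kdelta m j i := by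
  simp [kdelta, eq_comm]

lemma sum_kdelta_kdelta {m : ℕ} (i j : Fin m) :
    ∑ k, kdelta m i k * kdelta m j k = kdelta m i j := by
  rcases eq_or_ne i j with h | h
  · subst h; simp [kdelta]
  · simp [kdelta, h]

lemma bilin_form {m : ℕ} (P : Fin m → Fin m → ℝ) (v x y : Fin m → ℝ) (a b : ℝ)
    (hform : ∀ i j, P i j = a * kdelta m i j + b * (v i * v j)) :
    ∑ i, ∑ j, P i j * x i * y j
      = a * (∑ i, x i * y i) + b * (∑ i, v i * x i) * (∑ j, v j * y j) := by
  have hrow : ∀ i, ∑ j, P i j * x i * y j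
      = a * (x i * y i) + (b * (v i * x i)) * ∑ j, v j * y j := by
    intro i
    calc ∑ j, P i j * x i * y j
        = ∑ j, ((a * x i) * (y j * kdelta m i j) + (b * (v i * x i)) * (v j * y j)) :=
          Finset.sum_congr rfl fun j _ => by rw [hform]; ring
      _ = (a * x i) * (∑ j, y j * kdelta m i j) + (b * (v i * x i)) * ∑ j, v j * y j := by
          rw [Finset.sum_add_distrib, Finset.mul_sum, Finset.mul_sum]
      _ = a * (x i * y i) + (b * (v i * x i)) * ∑ j, v j * y j := by
          rw [sum_mul_kdelta (fun j => y j) i]; ring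
  calc ∑ i, ∑ j, P i j * x i * y j
      = ∑ i, (a * (x i * y i) + (b * (v i * x i)) * ∑ j, v j * y j) :=
        Finset.sum_congr rfl fun i _ => hrow i
    _ = a * (∑ i, x i * y i) + (∑ i, b * (v i * x i)) * (∑ j, v j * y j) := by
        rw [Finset.sum_add_distrib, Finset.mul_sum, Finset.sum_mul]
    _ = a * (∑ i, x i * y i) + b * (∑ i, v i * x i) * (∑ j, v j * y j) := by
        rw [← Finset.mul_sum]

lemma Dt_zero_of_form {m : ℕ} (hm1 : ((m:ℝ)-1) ≠ 0) (P : Fin m → Fin m → ℝ)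
    (v : Fin m → ℝ) (a b : ℝ)
    (hform : ∀ i j, P i j = a * kdelta m i j + b * (v i * v j)) :
    ∀ i j k, Dt m P v i j k = 0 := by
  intro i j k
  unfold Dt
  set S : ℝ := ∑ r, v r * v r with hS
  have h1 : ∑ l, v l * (P l k * kdelta m i j - P l j * kdelta m i k)
      = (a + b * S) * (v k * kdelta m i j - v j * kdelta m i k) := by
    calc ∑ l, v l * (P l k * kdelta m i j - P l j * kdelta m i k)
        = ∑ l, ((a * kdelta m i j) * (v l * kdelta m k l)
            + (b * (v k * kdelta m i j)) * (v l * v l)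
            - ((a * kdelta m i k) * (v l * kdelta m j l)
            + (b * (v j * kdelta m i k)) * (v l * v l))) :=
          Finset.sum_congr rfl fun l _ => by
            rw [hform l k, hform l j, kdelta_symm l k, kdelta_symm l j]; ring
      _ = ((a * kdelta m i j) * (∑ l, v l * kdelta m k l)
            + (b * (v k * kdelta m i j)) * S)
          - ((a * kdelta m i k) * (∑ l, v l * kdelta m j l)
            + (b * (v j * kdelta m i k)) * S) := by
          rw [Finset.sum_sub_distrib, Finset.sum_add_distrib, Finset.sum_add_distrib,
            Finset.mul_sum, Finset.mul_sum, Finset.mul_sum, Finset.mul_sum]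
      _ = (a + b * S) * (v k * kdelta m i j - v j * kdelta m i k) := by
          rw [sum_mul_kdelta v k, sum_mul_kdelta v j]; ring
  have h2 : ∑ l, P l l = a * m + b * S := by
    calc ∑ l, P l l = ∑ l : Fin m, (a + b * (v l * v l)) :=
          Finset.sum_congr rfl fun l _ => by rw [hform l l]; simp [kdelta]
      _ = a * m + b * S := by
          rw [Finset.sum_add_distrib, ← Finset.mul_sum]
          simp [mul_comm, hS]
  apply mul_eq_zero_of_right
  rw [h1, h2, hform i j, hform i k]
  field_simp
  ring

lemma expand_bilin {m : ℕ} (P : Fin m → Fin m → ℝ) (hP : ∀ i j, P i j = P j i)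
    (v : Fin m → ℝ) (μ : ℝ) (hμ : ∀ i, (∑ l, P i l * v l) = μ * v i)
    (i j : Fin m) (c d : ℝ) :
    ∑ k, ∑ l, P k l * (kdelta m i k - c * v k) * (kdelta m j l - d * v l)
      = P i j - d * (μ * v i) - c * (μ * v j) + c * d * (μ * (∑ r, v r * v r)) := by
  have hrow : ∀ k, ∑ l, P k l * (kdelta m i k - c * v k) * (kdelta m j l - d * v l)
      = (kdelta m i k - c * v k) * P k j - ((kdelta m i k - c * v k) * d) * (μ * v k) := by
    intro k
    calc ∑ l, P k l * (kdelta m i k - c * v k) * (kdelta m j l - d * v l)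
        = ∑ l, ((kdelta m i k - c * v k) * (P k l * kdelta m j l)
            - ((kdelta m i k - c * v k) * d) * (P k l * v l)) :=
          Finset.sum_congr rfl fun l _ => by ring
      _ = (kdelta m i k - c * v k) * (∑ l, P k l * kdelta m j l)
            - ((kdelta m i k - c * v k) * d) * (∑ l, P k l * v l) := by
          rw [Finset.sum_sub_distrib, Finset.mul_sum, Finset.mul_sum]
      _ = (kdelta m i k - c * v k) * P k j - ((kdelta m i k - c * v k) * d) * (μ * v k) := by
          rw [sum_mul_kdelta (fun l => P k l) j, hμ k]
  have hvP : ∑ k, v k * P k j = μ * v j := by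
    calc ∑ k, v k * P k j = ∑ k, P j k * v k :=
          Finset.sum_congr rfl fun k _ => by rw [hP k j]; ring
      _ = μ * v j := hμ j
  calc ∑ k, ∑ l, P k l * (kdelta m i k - c * v k) * (kdelta m j l - d * v l)
      = ∑ k, ((kdelta m i k * P k j) - c * (v k * P k j)
          - (d * μ) * (kdelta m i k * v k) + (c * d * μ) * (v k * v k)) := by
        refine Finset.sum_congr rfl fun k _ => ?_
        rw [hrow k]; ring
    _ = (∑ k, kdelta m i k * P k j) - c * (∑ k, v k * P k j)
          - (d * μ) * (∑ k, kdelta m i k * v k) + (c * d * μ) * (∑ k, v k * v k) := by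
        rw [Finset.sum_add_distrib, Finset.sum_sub_distrib, Finset.sum_sub_distrib,
          Finset.mul_sum, Finset.mul_sum, Finset.mul_sum]
    _ = P i j - d * (μ * v i) - c * (μ * v j) + c * d * (μ * (∑ r, v r * v r)) := by
        rw [sum_kdelta_mul (fun k => P k j) i, hvP, sum_kdelta_mul v i]; ring

lemma expand_inner {m : ℕ} (v : Fin m → ℝ) (i j : Fin m) (c d : ℝ) :
    ∑ k, (kdelta m i k - c * v k) * (kdelta m j k - d * v k)
      = kdelta m i j - d * v i - c * v j + c * d * (∑ r, v r * v r) := by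
  calc ∑ k, (kdelta m i k - c * v k) * (kdelta m j k - d * v k)
      = ∑ k, (kdelta m i k * kdelta m j k - d * (kdelta m i k * v k)
          - c * (v k * kdelta m j k) + (c * d) * (v k * v k)) :=
        Finset.sum_congr rfl fun k _ => by ring
    _ = (∑ k, kdelta m i k * kdelta m j k) - d * (∑ k, kdelta m i k * v k)
          - c * (∑ k, v k * kdelta m j k) + (c * d) * (∑ k, v k * v k) := by
        rw [Finset.sum_add_distrib, Finset.sum_sub_distrib, Finset.sum_sub_distrib,
          Finset.mul_sum, Finset.mul_sum, Finset.mul_sum]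
    _ = kdelta m i j - d * v i - c * v j + c * d * (∑ r, v r * v r) := by
        rw [sum_kdelta_kdelta, sum_kdelta_mul v i, sum_mul_kdelta v j]

/-- `D(P,v) = 0` if and only if `v` is an eigenvector of `P` and `P` restricted to the
orthogonal complement of `v` is `τ` times the inner product, where
`τ = ((Σ_l P_{ll}) − (Σ_{l,k} P_{lk}v_lv_k)/|v|²)/(m−1)`. -/
theorem Dt_eq_zero_iff (m : ℕ) (hm : 3 ≤ m) (P : Fin m → Fin m → ℝ)
    (hP : ∀ i j, P i j = P j i) (v : Fin m → ℝ) (hv : v ≠ 0) :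
    (∀ i j k, Dt m P v i j k = 0) ↔
      ((∃ μ : ℝ, ∀ i, (∑ l, P i l * v l) = μ * v i) ∧
        (∀ x y : Fin m → ℝ, (∑ i, x i * v i) = 0 → (∑ i, y i * v i) = 0 →
          (∑ i, ∑ j, P i j * x i * y j) =
            (((∑ l, P l l) - (∑ l, ∑ k, P l k * v l * v k) / (∑ i, v i * v i))
                / ((m : ℝ) - 1)) *
              ∑ i, x i * y i)) := by

  have hm3 : (3:ℝ) ≤ (m:ℝ) := by exact_mod_cast hm
  have hm1 : ((m:ℝ) - 1) ≠ 0 := by linarith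
  have hm2 : ((m:ℝ) - 2) ≠ 0 := by linarith
  obtain ⟨i0, hi0⟩ : ∃ i, v i ≠ 0 := Function.ne_iff.mp hv
  have hSpos : (0:ℝ) < ∑ r, v r * v r :=
    Finset.sum_pos' (fun r _ => mul_self_nonneg _) ⟨i0, Finset.mem_univ _, mul_self_pos.mpr hi0⟩
  have hSne : (∑ r, v r * v r) ≠ 0 := ne_of_gt hSpos
  constructor
  · intro hD
    have hE : ∀ i j k, v k * P i j - v j * P i k
        + (1/((m:ℝ)-1)) * ((∑ l, P k l * v l) * kdelta m i j
            - (∑ l, P j l * v l) * kdelta m i k)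
        - ((∑ l, P l l)/((m:ℝ)-1)) * (v k * kdelta m i j - v j * kdelta m i k) = 0 := by
      intro i j k
      have h := hD i j k
      unfold Dt at h
      have h' := (mul_eq_zero.mp h).resolve_left (one_div_ne_zero hm2)
      have hsum : ∑ l, v l * (P l k * kdelta m i j - P l j * kdelta m i k)
          = (∑ l, P k l * v l) * kdelta m i j - (∑ l, P j l * v l) * kdelta m i k := by
        calc ∑ l, v l * (P l k * kdelta m i j - P l j * kdelta m i k)
            = ∑ l, ((P k l * v l) * kdelta m i j - (P j l * v l) * kdelta m i k) :=
              Finset.sum_congr rfl fun l _ => by rw [hP l k, hP l j]; ring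
          _ = (∑ l, P k l * v l) * kdelta m i j - (∑ l, P j l * v l) * kdelta m i k := by
              rw [Finset.sum_sub_distrib, Finset.sum_mul, Finset.sum_mul]
      rw [hsum] at h'
      linear_combination h'
    have hstar : ∀ i k, v k * (∑ l, P i l * v l) - (∑ r, v r * v r) * P i k
        + (1/((m:ℝ)-1)) * (v i * (∑ l, P k l * v l)
            - (∑ j, v j * (∑ l, P j l * v l)) * kdelta m i k)
        - ((∑ l, P l l)/((m:ℝ)-1)) * (v k * v i - (∑ r, v r * v r) * kdelta m i k)
          = 0 := by
      intro i k
      have h0 : ∑ j, v j * (v k * P i j - v j * P i k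
          + (1/((m:ℝ)-1)) * ((∑ l, P k l * v l) * kdelta m i j
              - (∑ l, P j l * v l) * kdelta m i k)
          - ((∑ l, P l l)/((m:ℝ)-1)) * (v k * kdelta m i j - v j * kdelta m i k)) = 0 :=
        Finset.sum_eq_zero fun j _ => by rw [hE i j k, mul_zero]
      have hexp : ∑ j, v j * (v k * P i j - v j * P i k
          + (1/((m:ℝ)-1)) * ((∑ l, P k l * v l) * kdelta m i j
              - (∑ l, P j l * v l) * kdelta m i k)
          - ((∑ l, P l l)/((m:ℝ)-1)) * (v k * kdelta m i j - v j * kdelta m i k))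
          = v k * (∑ j, P i j * v j) - (∑ j, v j * v j) * P i k
            + (1/((m:ℝ)-1)) * ((∑ l, P k l * v l) * (∑ j, v j * kdelta m i j)
                - (∑ j, v j * (∑ l, P j l * v l)) * kdelta m i k)
            - ((∑ l, P l l)/((m:ℝ)-1)) * (v k * (∑ j, v j * kdelta m i j)
                - (∑ j, v j * v j) * kdelta m i k) := by
        calc ∑ j, v j * (v k * P i j - v j * P i k
              + (1/((m:ℝ)-1)) * ((∑ l, P k l * v l) * kdelta m i j
                  - (∑ l, P j l * v l) * kdelta m i k)
              - ((∑ l, P l l)/((m:ℝ)-1)) * (v k * kdelta m i j - v j * kdelta m i k))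
            = ∑ j, ((P i j * v j) * v k - (v j * v j) * P i k
              + ((1/((m:ℝ)-1)) * (∑ l, P k l * v l)) * (v j * kdelta m i j)
              - ((1/((m:ℝ)-1)) * kdelta m i k) * (v j * (∑ l, P j l * v l))
              - (((∑ l, P l l)/((m:ℝ)-1)) * v k) * (v j * kdelta m i j)
              + (((∑ l, P l l)/((m:ℝ)-1)) * kdelta m i k) * (v j * v j)) :=
              Finset.sum_congr rfl fun j _ => by ring
          _ = (∑ j, P i j * v j) * v k - (∑ j, v j * v j) * P i k
              + ((1/((m:ℝ)-1)) * (∑ l, P k l * v l)) * (∑ j, v j * kdelta m i j)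
              - ((1/((m:ℝ)-1)) * kdelta m i k) * (∑ j, v j * (∑ l, P j l * v l))
              - (((∑ l, P l l)/((m:ℝ)-1)) * v k) * (∑ j, v j * kdelta m i j)
              + (((∑ l, P l l)/((m:ℝ)-1)) * kdelta m i k) * (∑ j, v j * v j) := by
              simp only [Finset.sum_add_distrib, Finset.sum_sub_distrib,
                ← Finset.mul_sum, ← Finset.sum_mul]
          _ = _ := by rw [sum_mul_kdelta v i]; ring
      rw [hexp] at h0
      rw [sum_mul_kdelta v i] at h0
      linear_combination h0
    have hvw : ∀ i k, v k * (∑ l, P i l * v l) = v i * (∑ l, P k l * v l) := by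
      intro i k
      have h1 := hstar i k
      have h2 := hstar k i
      rw [kdelta_symm k i, hP k i] at h2
      have key : (1 - 1/((m:ℝ)-1)) * (v k * (∑ l, P i l * v l)
          - v i * (∑ l, P k l * v l)) = 0 := by
        linear_combination h1 - h2
      have hfac : (1 - 1/((m:ℝ)-1)) ≠ 0 := by
        have : (1 : ℝ) - 1/((m:ℝ)-1) = ((m:ℝ)-2)/((m:ℝ)-1) := by field_simp; ring
        rw [this]
        exact div_ne_zero hm2 hm1
      have := (mul_eq_zero.mp key).resolve_left hfac
      linarith
    set lam : ℝ := (∑ l, P i0 l * v l) / v i0 with hlam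
    clear_value lam
    have hw : ∀ k, (∑ l, P k l * v l) = lam * v k := by
      intro k
      rw [hlam, div_mul_eq_mul_div, eq_div_iff hi0]
      linear_combination (-1 : ℝ) * hvw i0 k
    have hQ : ∑ j, v j * (∑ l, P j l * v l) = lam * (∑ r, v r * v r) := by
      calc ∑ j, v j * (∑ l, P j l * v l) = ∑ j, lam * (v j * v j) :=
            Finset.sum_congr rfl fun j _ => by rw [hw j]; ring
        _ = lam * (∑ r, v r * v r) := by rw [← Finset.mul_sum]
    have hform : ∀ i k, P i k
        = (((∑ l, P l l) - lam)/((m:ℝ)-1)) * kdelta m i k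
          + ((lam * m - (∑ l, P l l))/(((m:ℝ)-1) * (∑ r, v r * v r))) * (v i * v k) := by
      intro i k
      have h1 := hstar i k
      rw [hw i, hw k, hQ] at h1
      simp only [← pow_two] at h1 hSne ⊢
      field_simp at h1
      rw [div_mul_eq_mul_div, div_mul_eq_mul_div, div_add_div _ _ hm1 (mul_ne_zero hm1 hSne),
        eq_div_iff (mul_ne_zero hm1 (mul_ne_zero hm1 hSne))]
      linear_combination (1 - (m:ℝ)) * h1
    refine ⟨⟨lam, fun i => hw i⟩, ?_⟩
    intro x y hx hy
    have hPvv : ∑ l, ∑ k, P l k * v l * v k = lam * (∑ r, v r * v r) := by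
      calc ∑ l, ∑ k, P l k * v l * v k = ∑ l, v l * (∑ k, P l k * v k) := by
            refine Finset.sum_congr rfl fun l _ => ?_
            rw [Finset.mul_sum]
            exact Finset.sum_congr rfl fun k _ => by ring
        _ = lam * (∑ r, v r * v r) := hQ
    have hvx : ∑ i, v i * x i = 0 := by
      rw [← hx]; exact Finset.sum_congr rfl fun i _ => mul_comm _ _
    rw [bilin_form P v x y _ _ hform, hvx, hPvv,
      mul_div_assoc, div_self hSne, mul_one]
    ring
  · rintro ⟨⟨μ, hμ⟩, htau⟩
    have hQ : ∑ l, ∑ k, P l k * v l * v k = μ * (∑ r, v r * v r) := by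
      calc ∑ l, ∑ k, P l k * v l * v k = ∑ l, v l * (∑ k, P l k * v k) := by
            refine Finset.sum_congr rfl fun l _ => ?_
            rw [Finset.mul_sum]
            exact Finset.sum_congr rfl fun k _ => by ring
        _ = ∑ l, μ * (v l * v l) :=
            Finset.sum_congr rfl fun l _ => by rw [hμ l]; ring
        _ = μ * (∑ r, v r * v r) := by rw [← Finset.mul_sum]
    have hform : ∀ i j, P i j
        = (((∑ l, P l l) - μ)/((m:ℝ)-1)) * kdelta m i j
          + ((μ - ((∑ l, P l l) - μ)/((m:ℝ)-1))/(∑ r, v r * v r)) * (v i * v j) := by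
      intro i j
      have hx : ∑ k, (kdelta m i k - (v i / (∑ r, v r * v r)) * v k) * v k = 0 := by
        calc ∑ k, (kdelta m i k - (v i / (∑ r, v r * v r)) * v k) * v k
            = ∑ k, (kdelta m i k * v k - (v i / (∑ r, v r * v r)) * (v k * v k)) :=
              Finset.sum_congr rfl fun k _ => by ring
          _ = v i - (v i / (∑ r, v r * v r)) * (∑ r, v r * v r) := by
              rw [Finset.sum_sub_distrib, ← Finset.mul_sum, sum_kdelta_mul v i]
          _ = 0 := by rw [div_mul_cancel₀ _ hSne, sub_self]
      have hy : ∑ k, (kdelta m j k - (v j / (∑ r, v r * v r)) * v k) * v k = 0 := by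
        calc ∑ k, (kdelta m j k - (v j / (∑ r, v r * v r)) * v k) * v k
            = ∑ k, (kdelta m j k * v k - (v j / (∑ r, v r * v r)) * (v k * v k)) :=
              Finset.sum_congr rfl fun k _ => by ring
          _ = v j - (v j / (∑ r, v r * v r)) * (∑ r, v r * v r) := by
              rw [Finset.sum_sub_distrib, ← Finset.mul_sum, sum_kdelta_mul v j]
          _ = 0 := by rw [div_mul_cancel₀ _ hSne, sub_self]
      have h := htau (fun k => kdelta m i k - (v i / (∑ r, v r * v r)) * v k)
        (fun k => kdelta m j k - (v j / (∑ r, v r * v r)) * v k) hx hy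
      rw [expand_bilin P hP v μ hμ i j _ _, expand_inner v i j _ _, hQ,
        mul_div_assoc, div_self hSne, mul_one] at h
      set c : ℝ := v i / (∑ r, v r * v r) with hcdef
      set d : ℝ := v j / (∑ r, v r * v r) with hddef
      have hc : v i = c * (∑ r, v r * v r) := by rw [hcdef, div_mul_cancel₀ _ hSne]
      have hd : v j = d * (∑ r, v r * v r) := by rw [hddef, div_mul_cancel₀ _ hSne]
      clear_value c d
      rw [hc, hd] at h ⊢
      simp only [← pow_two] at h hSne ⊢
      field_simp at h ⊢
      linear_combination h
    exact Dt_zero_of_form hm1 P v _ _ hform
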